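/- arXiv:1903.09954 — 3 statements merged into one kernel-verified Lean document; each statement's English description precedes it below -/
import Mathlib

section
/- Let Λ ⊂ ℝ^{nT} be a full-rank lattice whose dual Λ* admits algebraic reduction with constant α, meaning: for every unit-determinant n×n matrix E·U decomposition as in the hypothesis, with UΛ* = Λ* and ‖E^{-1}‖_F ≤ α. Let A be an n×n positive definite matrix with √A/(det A)^{1/(2n)} = E·U such a decomposition. Then Σ_{λ ∈ Λ* \ {0}} exp(−π²·λᵀ(I_T ⊗ A)λ) ≤ Σ_{λ ∈ Λ* \ {0}} exp(−π²·(det A)^{1/n}·‖λ‖²/α²). -/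
open Matrix Real Kronecker

section aux
variable {n T : ℕ}

lemma kron_mulVec (M : Matrix (Fin n) (Fin n) ℝ) (w : Fin T × Fin n → ℝ) (p : Fin T × Fin n) :
    (((1 : Matrix (Fin T) (Fin T) ℝ) ⊗ₖ M) *ᵥ w) p = ∑ j, M p.2 j * w (p.1, j) := by
  rw [mulVec, dotProduct, Fintype.sum_prod_type]
  rw [Finset.sum_eq_single p.1]
  · simp [kroneckerMap_apply, Matrix.one_apply]
  · intro t _ ht
    simp [kroneckerMap_apply, Matrix.one_apply, ht.symm]
  · simp

lemma kron_CS (M : Matrix (Fin n) (Fin n) ℝ) (w : Fin T × Fin n → ℝ) :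
    (((1 : Matrix (Fin T) (Fin T) ℝ) ⊗ₖ M) *ᵥ w) ⬝ᵥ (((1 : Matrix (Fin T) (Fin T) ℝ) ⊗ₖ M) *ᵥ w)
      ≤ (∑ i, ∑ j, (M i j) ^ 2) * (w ⬝ᵥ w) := by
  simp only [dotProduct, kron_mulVec, ← sq]
  rw [Fintype.sum_prod_type]
  calc ∑ t, ∑ i, (∑ j, M i j * w (t, j)) ^ 2
      ≤ ∑ t : Fin T, ∑ i, (∑ j, (M i j)^2) * (∑ j, (w (t, j))^2) := by
        apply Finset.sum_le_sum; intro t _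
        apply Finset.sum_le_sum; intro i _
        exact Finset.sum_mul_sq_le_sq_mul_sq _ _ _
    _ = (∑ i, ∑ j, (M i j) ^ 2) * (∑ t : Fin T, ∑ j, (w (t, j))^2) := by
        rw [Finset.mul_sum]
        congr 1; ext t
        rw [← Finset.sum_mul, Finset.sum_mul]
    _ = (∑ i, ∑ j, (M i j) ^ 2) * ∑ p : Fin T × Fin n, (w p)^2 := by
        rw [Fintype.sum_prod_type]

end aux

theorem stmt5 {n T : ℕ} (hn : 0 < n) (Lstar : AddSubgroup (Fin T × Fin n → ℝ))
    (A S E U : Matrix (Fin n) (Fin n) ℝ) (α : ℝ) (hα : 0 < α)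
    (hA : A.PosDef) (hS : Sᵀ * S = A)
    (hdecomp : S = (A.det ^ (1 / (2 * (n : ℝ)))) • (E * U))
    (hE : E.det = 1) (hU : U.det = 1)
    (hUL : ∀ x, x ∈ Lstar ↔
      (Matrix.kroneckerMap (· * ·) (1 : Matrix (Fin T) (Fin T) ℝ) U) *ᵥ x ∈ Lstar)
    (hEF : Real.sqrt (∑ i, ∑ j, (E⁻¹ i j) ^ 2) ≤ α) :
    (∑' x : {x : Fin T × Fin n → ℝ // x ∈ Lstar ∧ x ≠ 0},
      ENNReal.ofReal (Real.exp (-(π ^ 2) *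
        ((x : Fin T × Fin n → ℝ) ⬝ᵥ
          (Matrix.kroneckerMap (· * ·) (1 : Matrix (Fin T) (Fin T) ℝ) A) *ᵥ
            (x : Fin T × Fin n → ℝ)))))
    ≤ ∑' x : {x : Fin T × Fin n → ℝ // x ∈ Lstar ∧ x ≠ 0},
      ENNReal.ofReal (Real.exp (-(π ^ 2) * (A.det ^ (1 / (n : ℝ))) *
        ((x : Fin T × Fin n → ℝ) ⬝ᵥ (x : Fin T × Fin n → ℝ)) / α ^ 2)) := by
  classical
  have hdet : 0 < A.det := hA.det_pos
  set c : ℝ := A.det ^ (1 / (2 * (n : ℝ))) with hc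
  have hc2 : c ^ 2 = A.det ^ (1 / (n : ℝ)) := by
    rw [hc, ← Real.rpow_natCast (A.det ^ _) 2, ← Real.rpow_mul hdet.le]
    congr 1
    push_cast
    field_simp
  -- invertibility
  have hEunit : IsUnit E.det := by rw [hE]; exact isUnit_one
  have hUunit : IsUnit U.det := by rw [hU]; exact isUnit_one
  set KU : Matrix (Fin T × Fin n) (Fin T × Fin n) ℝ := (1 : Matrix (Fin T) (Fin T) ℝ) ⊗ₖ U
  set KUi : Matrix (Fin T × Fin n) (Fin T × Fin n) ℝ := (1 : Matrix (Fin T) (Fin T) ℝ) ⊗ₖ U⁻¹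
  have hKU1 : KU * KUi = 1 := by
    rw [← mul_kronecker_mul, one_mul, mul_nonsing_inv _ hUunit, one_kronecker_one]
  have hKU2 : KUi * KU = 1 := by
    rw [← mul_kronecker_mul, one_mul, nonsing_inv_mul _ hUunit, one_kronecker_one]
  have hKUinv : ∀ x : Fin T × Fin n → ℝ, KUi *ᵥ (KU *ᵥ x) = x := by
    intro x; rw [mulVec_mulVec, hKU2, one_mulVec]
  have hKUinv' : ∀ x : Fin T × Fin n → ℝ, KU *ᵥ (KUi *ᵥ x) = x := by
    intro x; rw [mulVec_mulVec, hKU1, one_mulVec]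
  -- the equiv
  let e : {x : Fin T × Fin n → ℝ // x ∈ Lstar ∧ x ≠ 0} ≃
      {x : Fin T × Fin n → ℝ // x ∈ Lstar ∧ x ≠ 0} :=
    { toFun := fun x => ⟨KU *ᵥ (x : Fin T × Fin n → ℝ),
        (hUL _).mp x.2.1,
        fun h => x.2.2 (by rw [← hKUinv (x : Fin T × Fin n → ℝ), h, mulVec_zero])⟩
      invFun := fun x => ⟨KUi *ᵥ (x : Fin T × Fin n → ℝ),
        (hUL _).mpr (by rw [hKUinv']; exact x.2.1),
        fun h => x.2.2 (by rw [← hKUinv' (x : Fin T × Fin n → ℝ), h, mulVec_zero])⟩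
      left_inv := fun x => Subtype.ext (hKUinv _)
      right_inv := fun x => Subtype.ext (hKUinv' _) }
  -- pointwise bound
  have key : ∀ x : Fin T × Fin n → ℝ,
      -(π ^ 2) * (x ⬝ᵥ ((1 : Matrix (Fin T) (Fin T) ℝ) ⊗ₖ A) *ᵥ x)
        ≤ -(π ^ 2) * (A.det ^ (1 / (n : ℝ))) * ((KU *ᵥ x) ⬝ᵥ (KU *ᵥ x)) / α ^ 2 := by
    intro x
    set y : Fin T × Fin n → ℝ := KU *ᵥ x with hy
    set w : Fin T × Fin n → ℝ := ((1 : Matrix (Fin T) (Fin T) ℝ) ⊗ₖ E) *ᵥ y with hw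
    have hyw : y = ((1 : Matrix (Fin T) (Fin T) ℝ) ⊗ₖ E⁻¹) *ᵥ w := by
      rw [hw, mulVec_mulVec, ← mul_kronecker_mul, one_mul, nonsing_inv_mul _ hEunit,
        one_kronecker_one, one_mulVec]
    have hwnn : 0 ≤ w ⬝ᵥ w := Finset.sum_nonneg fun i _ => mul_self_nonneg _
    have hynn : 0 ≤ y ⬝ᵥ y := Finset.sum_nonneg fun i _ => mul_self_nonneg _
    have hCS : y ⬝ᵥ y ≤ α ^ 2 * (w ⬝ᵥ w) := by
      have h1 := kron_CS (T := T) E⁻¹ w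
      rw [← hyw] at h1
      refine h1.trans (mul_le_mul_of_nonneg_right ?_ hwnn)
      have hnn : 0 ≤ ∑ i, ∑ j, (E⁻¹ i j) ^ 2 :=
        Finset.sum_nonneg fun i _ => Finset.sum_nonneg fun j _ => sq_nonneg _
      calc ∑ i, ∑ j, (E⁻¹ i j) ^ 2 = (Real.sqrt (∑ i, ∑ j, (E⁻¹ i j) ^ 2)) ^ 2 :=
            (Real.sq_sqrt hnn).symm
        _ ≤ α ^ 2 := by
            apply pow_le_pow_left₀ (Real.sqrt_nonneg _) hEF
    -- x ⬝ KA x = c^2 * (w ⬝ w)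
    have hxA : x ⬝ᵥ ((1 : Matrix (Fin T) (Fin T) ℝ) ⊗ₖ A) *ᵥ x = c ^ 2 * (w ⬝ᵥ w) := by
      have hKA : (1 : Matrix (Fin T) (Fin T) ℝ) ⊗ₖ A
          = (((1 : Matrix (Fin T) (Fin T) ℝ) ⊗ₖ S)ᵀ) * ((1 : Matrix (Fin T) (Fin T) ℝ) ⊗ₖ S) := by
        rw [← kroneckerMap_transpose, transpose_one, ← mul_kronecker_mul, one_mul, hS]
      have hKS : ((1 : Matrix (Fin T) (Fin T) ℝ) ⊗ₖ S) *ᵥ x = c • w := by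
        rw [hdecomp, kronecker_smul, smul_mulVec, hw, hy, mulVec_mulVec,
          ← mul_kronecker_mul, one_mul]
      rw [hKA, ← mulVec_mulVec, dotProduct_mulVec, vecMul_transpose, hKS]
      rw [smul_dotProduct, dotProduct_smul, smul_eq_mul, smul_eq_mul, sq]
      ring
    rw [hxA, ← hc2, le_div_iff₀ (by positivity)]
    have h2 : π ^ 2 * c ^ 2 * (y ⬝ᵥ y) ≤ π ^ 2 * c ^ 2 * (α ^ 2 * (w ⬝ᵥ w)) :=
      mul_le_mul_of_nonneg_left hCS (by positivity)
    nlinarith [h2]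
  -- now rewrite RHS via equiv and compare termwise
  calc (∑' x : {x : Fin T × Fin n → ℝ // x ∈ Lstar ∧ x ≠ 0},
      ENNReal.ofReal (Real.exp (-(π ^ 2) *
        ((x : Fin T × Fin n → ℝ) ⬝ᵥ
          (Matrix.kroneckerMap (· * ·) (1 : Matrix (Fin T) (Fin T) ℝ) A) *ᵥ
            (x : Fin T × Fin n → ℝ)))))
      ≤ ∑' x : {x : Fin T × Fin n → ℝ // x ∈ Lstar ∧ x ≠ 0},
        ENNReal.ofReal (Real.exp (-(π ^ 2) * (A.det ^ (1 / (n : ℝ))) *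
          (((e x : Fin T × Fin n → ℝ)) ⬝ᵥ ((e x : Fin T × Fin n → ℝ))) / α ^ 2)) := by
        apply ENNReal.tsum_le_tsum
        intro x
        apply ENNReal.ofReal_le_ofReal
        apply Real.exp_le_exp.mpr
        exact key (x : Fin T × Fin n → ℝ)
    _ = _ := e.tsum_eq (fun z => ENNReal.ofReal (Real.exp (-(π ^ 2) * (A.det ^ (1 / (n : ℝ))) *
        ((z : Fin T × Fin n → ℝ) ⬝ᵥ (z : Fin T × Fin n → ℝ)) / α ^ 2)))
end

section
/- Let Λ ⊂ ℝⁿ be a full-rank lattice with volume V(Λ), and σ > 0. Then the flatness factor satisfies ε_Λ(σ) = (γ_Λ(σ)/(2π))^{n/2} · Θ_Λ(1/(2πσ²)) − 1, where γ_Λ(σ) = V(Λ)^{2/n}/σ² is the volume-to-noise ratio and Θ_Λ(τ) = Σ_{λ∈Λ} exp(−πτ‖λ‖²) is the theta series, and the flatness factor is defined as ε_Λ(σ) = max_{x ∈ ℝⁿ} |V(Λ)·f_{σ,Λ}(x) − 1| with f_{σ,Λ}(x) = Σ_{λ∈Λ} (2πσ²)^{−n/2} exp(−‖x−λ‖²/(2σ²)).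 -/
open Matrix Real MeasureTheory ENNReal

namespace Stmt11Aux

variable {n : ℕ}

/-- cast an integer vector to a real vector -/
def zc (k : Fin n → ℤ) : Fin n → ℝ := fun i => (k i : ℝ)

/-- the quadratic form ‖Bv‖² -/
def Q (B : Matrix (Fin n) (Fin n) ℝ) (v : Fin n → ℝ) : ℝ := (B *ᵥ v) ⬝ᵥ (B *ᵥ v)

lemma Q_nonneg (B : Matrix (Fin n) (Fin n) ℝ) (v : Fin n → ℝ) : 0 ≤ Q B v := by
  unfold Q dotProduct
  exact Finset.sum_nonneg fun i _ => mul_self_nonneg _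

lemma Q_neg (B : Matrix (Fin n) (Fin n) ℝ) (v : Fin n → ℝ) : Q B (-v) = Q B v := by
  simp [Q, Matrix.mulVec_neg]

lemma dot_identity (a b : Fin n → ℝ) :
    (a + b) ⬝ᵥ (a + b) + (a - b) ⬝ᵥ (a - b) = 2 * (a ⬝ᵥ a) + 2 * (b ⬝ᵥ b) := by
  simp only [add_dotProduct, sub_dotProduct, dotProduct_add,
    dotProduct_sub, dotProduct_comm b a]
  ring

lemma Q_parallelogram (B : Matrix (Fin n) (Fin n) ℝ) (p r : Fin n → ℝ) :
    Q B (p + r) + Q B (p - r) = 2 * Q B p + 2 * Q B r := by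
  simpa [Q, Matrix.mulVec_add, Matrix.mulVec_sub] using dot_identity (B *ᵥ p) (B *ᵥ r)

lemma Q_add_le (B : Matrix (Fin n) (Fin n) ℝ) (p r : Fin n → ℝ) :
    Q B (p + r) ≤ 2 * Q B p + 2 * Q B r := by
  nlinarith [Q_parallelogram B p r, Q_nonneg B (p - r)]

/-- Gaussian, ℝ≥0∞-valued -/
noncomputable def g (B : Matrix (Fin n) (Fin n) ℝ) (t : ℝ) (v : Fin n → ℝ) : ℝ≥0∞ :=
  ENNReal.ofReal (Real.exp (-t * Q B v))

/-- periodized Gaussian -/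
noncomputable def S (B : Matrix (Fin n) (Fin n) ℝ) (t : ℝ) (u : Fin n → ℝ) : ℝ≥0∞ :=
  ∑' k : Fin n → ℤ, g B t (u - zc k)

lemma measurable_Q (B : Matrix (Fin n) (Fin n) ℝ) : Measurable (Q B) := by
  have : Continuous (Q B) := by
    unfold Q Matrix.mulVec dotProduct
    fun_prop
  exact this.measurable

lemma measurable_g (B : Matrix (Fin n) (Fin n) ℝ) (t : ℝ) : Measurable (g B t) := by
  unfold g
  have h : Measurable fun v => -t * Q B v := (measurable_Q B).const_mul (-t)
  exact ENNReal.measurable_ofReal.comp (Real.measurable_exp.comp h)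

lemma measurable_S (B : Matrix (Fin n) (Fin n) ℝ) (t : ℝ) : Measurable (S B t) :=
  Measurable.ennreal_tsum fun k => (measurable_g B t).comp (measurable_sub_const (zc k))

lemma zc_add (k l : Fin n → ℤ) : zc (k + l) = zc k + zc l := by
  funext i; simp [zc]

lemma zc_neg (k : Fin n → ℤ) : zc (-k) = -zc k := by
  funext i; simp [zc]

lemma S_periodic (B : Matrix (Fin n) (Fin n) ℝ) (t : ℝ) (u : Fin n → ℝ) (l : Fin n → ℤ) :
    S B t (u + zc l) = S B t u := by
  rw [S, ← Equiv.tsum_eq (Equiv.addRight l) (fun k => g B t (u + zc l - zc k))]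
  apply tsum_congr; intro k
  congr 1
  simp only [Equiv.coe_addRight, zc_add]
  abel

lemma S_even (B : Matrix (Fin n) (Fin n) ℝ) (t : ℝ) (u : Fin n → ℝ) :
    S B t (-u) = S B t u := by
  rw [S, ← Equiv.tsum_eq (Equiv.neg (Fin n → ℤ)) (fun k => g B t (-u - zc k))]
  apply tsum_congr; intro k
  simp only [Equiv.neg_apply, zc_neg, sub_neg_eq_add, g]
  rw [show -u + zc k = -(u - zc k) by abel, Q_neg]


-- affine change of variables for lintegrals
lemma lintegral_comp_affine (f : (Fin n → ℝ) → ℝ≥0∞) (hf : Measurable f)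
    (M : Matrix (Fin n) (Fin n) ℝ) (hM : M.det ≠ 0) (a : Fin n → ℝ) :
    ∫⁻ y, f (a + M *ᵥ y) = ENNReal.ofReal |M.det⁻¹| * ∫⁻ y, f y := by
  have hshift : Measurable fun z : Fin n → ℝ => f (a + z) :=
    hf.comp (measurable_const_add a)
  have hTm : Measurable (⇑(Matrix.toLin' M)) :=
    (LinearMap.continuous_of_finiteDimensional (Matrix.toLin' M)).measurable
  have h1 : ∫⁻ y, f (a + M *ᵥ y) = ∫⁻ z, f (a + z) ∂(Measure.map (⇑(Matrix.toLin' M)) volume) := by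
    rw [lintegral_map hshift hTm]
    simp [Matrix.toLin'_apply]
  rw [h1, Real.map_matrix_volume_pi_eq_smul_volume_pi hM, lintegral_smul_measure]
  congr 1
  exact (measurePreserving_add_left volume a).lintegral_comp hf

lemma volume_pi_ne_zero : (volume : Measure (Fin n → ℝ)) ≠ 0 := by
  intro h
  have h1 : (volume : Measure (Fin n → ℝ)) (Set.pi Set.univ fun _ : Fin n => Set.Ico (0:ℝ) 1) = 1 := by
    rw [volume_pi_pi]; simp
  rw [h] at h1
  simp at h1

-- Gaussian integral, standard coordinates
lemma lintegral_gauss_std {t : ℝ} (ht : 0 < t) :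
    ∫⁻ w : Fin n → ℝ, ENNReal.ofReal (Real.exp (-t * (w ⬝ᵥ w)))
      = ENNReal.ofReal ((π / t) ^ ((n : ℝ) / 2)) := by
  have hfeq : ∀ w : Fin n → ℝ, Real.exp (-t * (w ⬝ᵥ w))
      = ∏ i, Real.exp (-t * (w i) ^ 2) := by
    intro w
    rw [← Real.exp_sum]
    congr 1
    unfold dotProduct
    rw [Finset.mul_sum]
    congr 1; funext i; ring
  have hInt : Integrable fun w : Fin n → ℝ => ∏ i, Real.exp (-t * (w i) ^ 2) :=
    Integrable.fintype_prod (𝕜 := ℝ) fun _ => integrable_exp_neg_mul_sq ht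
  have hval : ∫ w : Fin n → ℝ, ∏ i, Real.exp (-t * (w i) ^ 2)
      = (π / t) ^ ((n : ℝ) / 2) := by
    rw [volume_pi, MeasureTheory.integral_fintype_prod_eq_pow (ι := Fin n) (fun x : ℝ => Real.exp (-t * x ^ 2)),
      integral_gaussian, Fintype.card_fin]
    rw [Real.sqrt_eq_rpow, ← Real.rpow_natCast ((π / t) ^ ((1:ℝ)/2)) n,
      ← Real.rpow_mul (by positivity)]
    congr 1
    ring
  simp only [hfeq]
  rw [← hval]
  refine (ofReal_integral_eq_lintegral_ofReal hInt ?_).symm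
  filter_upwards with w
  exact Finset.prod_nonneg fun i _ => (Real.exp_pos _).le

lemma lintegral_g (B : Matrix (Fin n) (Fin n) ℝ) (hB : B.det ≠ 0) {t : ℝ} (ht : 0 < t) :
    ∫⁻ v, g B t v = ENNReal.ofReal (|B.det⁻¹| * (π / t) ^ ((n : ℝ) / 2)) := by
  have hstd : Measurable fun w : Fin n → ℝ => ENNReal.ofReal (Real.exp (-t * (w ⬝ᵥ w))) := by
    have : (fun w : Fin n → ℝ => ENNReal.ofReal (Real.exp (-t * (w ⬝ᵥ w)))) = g 1 t := by
      funext w; simp [g, Q, Matrix.one_mulVec]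
    rw [this]; exact measurable_g 1 t
  have h := lintegral_comp_affine _ hstd B hB 0
  simp only [zero_add] at h
  have hg : (fun y => ENNReal.ofReal (Real.exp (-t * ((B *ᵥ y) ⬝ᵥ (B *ᵥ y))))) = g B t := by
    funext y; rfl
  rw [hg] at h
  rw [h, lintegral_gauss_std ht, ← ENNReal.ofReal_mul (abs_nonneg _)]

lemma lintegral_g_affine (B : Matrix (Fin n) (Fin n) ℝ) (hB : B.det ≠ 0) {c : ℝ} (hc : 0 < c)
    (a : Fin n → ℝ) :
    ∫⁻ y, g B c (a + (-2 : ℝ) • y)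
      = ENNReal.ofReal (((2:ℝ) ^ (n:ℕ))⁻¹ * (|B.det⁻¹| * (π / c) ^ ((n : ℝ) / 2))) := by
  set M2 : Matrix (Fin n) (Fin n) ℝ := (-2 : ℝ) • (1 : Matrix (Fin n) (Fin n) ℝ) with hM2
  have hM2det : M2.det = (-2 : ℝ) ^ (n : ℕ) := by
    rw [hM2, Matrix.det_smul, Matrix.det_one, Fintype.card_fin, mul_one]
  have hMv : ∀ y : Fin n → ℝ, M2 *ᵥ y = (-2 : ℝ) • y := by
    intro y; rw [hM2, Matrix.smul_mulVec, Matrix.one_mulVec]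
  have h := lintegral_comp_affine (g B c) (measurable_g B c) M2
    (by rw [hM2det]; positivity) a
  simp only [hMv] at h
  rw [h, lintegral_g B hB hc, ← ENNReal.ofReal_mul (abs_nonneg _)]
  congr 1
  rw [hM2det]
  congr 1
  rw [abs_inv, abs_pow, abs_neg]
  norm_num

lemma four_rpow_half (n : ℕ) : ((4:ℝ)) ^ ((n : ℝ) / 2) = (2:ℝ) ^ (n : ℕ) := by
  rw [← Real.rpow_natCast 2 n, show (4:ℝ) = (2:ℝ) ^ (2:ℝ) by
    rw [show (2:ℝ) = ((2:ℕ):ℝ) by norm_num, Real.rpow_natCast]; norm_num,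
    ← Real.rpow_mul (by norm_num)]
  congr 1
  ring

lemma conv (B : Matrix (Fin n) (Fin n) ℝ) (hB : B.det ≠ 0) {c : ℝ} (hc : 0 < c)
    (u w : Fin n → ℝ) :
    ∫⁻ y, g B (2 * c) (u - y) * g B (2 * c) (y - w)
      = ENNReal.ofReal (|B.det⁻¹| * (π / (4 * c)) ^ ((n : ℝ) / 2)) * g B c (u - w) := by
  have hpt : ∀ y, g B (2*c) (u - y) * g B (2*c) (y - w)
      = ENNReal.ofReal (Real.exp (-c * Q B (u - w))) * g B c ((u + w) + (-2 : ℝ) • y) := by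
    intro y
    unfold g
    rw [← ENNReal.ofReal_mul (Real.exp_nonneg _), ← Real.exp_add,
      ← ENNReal.ofReal_mul (Real.exp_nonneg _), ← Real.exp_add]
    congr 2
    have harg : (u + w) + (-2 : ℝ) • y = u - y - (y - w) := by
      funext i; simp; ring
    rw [harg]
    have hpar := Q_parallelogram B (u - y) (y - w)
    have hsum : (u - y) + (y - w) = u - w := by abel
    rw [hsum] at hpar
    linear_combination c * hpar
  simp only [hpt]
  have hmeas : Measurable fun y : Fin n → ℝ => g B c (u + w + (-2:ℝ) • y) :=
    (measurable_g B c).comp (by fun_prop)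
  rw [lintegral_const_mul _ hmeas]
  rw [lintegral_g_affine B hB hc]
  rw [mul_comm]
  congr 2
  have h1 : (π / (4 * c)) ^ ((n:ℝ)/2) = π ^ ((n:ℝ)/2) / ((2:ℝ)^(n:ℕ) * c ^ ((n:ℝ)/2)) := by
    rw [Real.div_rpow pi_pos.le (by positivity), Real.mul_rpow (by norm_num) hc.le, four_rpow_half n]
  have h2 : (π / c) ^ ((n:ℝ)/2) = π ^ ((n:ℝ)/2) / c ^ ((n:ℝ)/2) := Real.div_rpow pi_pos.le hc.le _
  rw [h1, h2]
  have hc2 : (0:ℝ) < c ^ ((n:ℝ)/2) := Real.rpow_pos_of_pos hc _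
  have h2n : (0:ℝ) < (2:ℝ)^(n:ℕ) := by positivity
  field_simp

/-! ### The lattice ℤⁿ and its fundamental domain -/

def Lat (n : ℕ) : AddSubgroup (Fin n → ℝ) :=
  (Submodule.span ℤ (Set.range ⇑(Pi.basisFun ℝ (Fin n)))).toAddSubgroup

def D0 (n : ℕ) : Set (Fin n → ℝ) := ZSpan.fundamentalDomain (Pi.basisFun ℝ (Fin n))

lemma sum_zsmul (k : Fin n → ℤ) : (∑ i, k i • (Pi.basisFun ℝ (Fin n)) i) = zc k := by
  funext j
  rw [Finset.sum_apply]
  simp [zc, Pi.basisFun_apply, Pi.single_apply]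

lemma zc_mem (k : Fin n → ℤ) : zc k ∈ Lat n := by
  rw [Lat, Submodule.mem_toAddSubgroup, Submodule.mem_span_range_iff_exists_fun ℤ]
  exact ⟨k, sum_zsmul k⟩

noncomputable def latEquiv : (Fin n → ℤ) ≃ Lat n :=
  Equiv.ofBijective (fun k => ⟨zc k, zc_mem k⟩)
    ⟨fun k k' h => by
        funext i
        have h2 : zc k = zc k' := congrArg Subtype.val h
        have h3 : (k i : ℝ) = (k' i : ℝ) := congrFun h2 i
        exact_mod_cast h3,
     fun g => by
        obtain ⟨c, hc⟩ := (Submodule.mem_span_range_iff_exists_fun ℤ).mp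
          (Submodule.mem_toAddSubgroup _ |>.mp g.2)
        rw [sum_zsmul] at hc
        exact ⟨c, Subtype.ext hc⟩⟩

lemma latEquiv_coe (k : Fin n → ℤ) : ((latEquiv k : Lat n) : Fin n → ℝ) = zc k := rfl

lemma countable_lat : Countable (Lat n) := Countable.of_equiv _ latEquiv

lemma D0_measurable : MeasurableSet (D0 n) :=
  ZSpan.fundamentalDomain_measurableSet _

lemma volume_D0 : (volume (D0 n)) = 1 := by
  rw [D0, ZSpan.fundamentalDomain_pi_basisFun, volume_pi_pi]
  simp

lemma lat_vadd (g : Lat n) (y : Fin n → ℝ) : g +ᵥ y = (g : Fin n → ℝ) + y := rfl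

/-- unfold an integral over ℝⁿ into a sum of integrals over the fundamental domain -/
lemma unfold_lintegral (f : (Fin n → ℝ) → ℝ≥0∞) :
    ∫⁻ x, f x = ∑' k : Fin n → ℤ, ∫⁻ y in D0 n, f (zc k + y) := by
  haveI : Countable (↥(Submodule.span ℤ (Set.range ⇑(Pi.basisFun ℝ (Fin n)))).toAddSubgroup) :=
    countable_lat
  rw [(ZSpan.isAddFundamentalDomain' (Pi.basisFun ℝ (Fin n)) volume).lintegral_eq_tsum'' f]
  exact (Equiv.tsum_eq latEquiv
    (fun g : Lat n => ∫⁻ x in ZSpan.fundamentalDomain (Pi.basisFun ℝ (Fin n)), f (g +ᵥ x))).symm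

/-- the reflected-translated fundamental domain is a fundamental domain -/
lemma isFD_reflected (u : Fin n → ℝ) :
    IsAddFundamentalDomain (Lat n) ((fun y => u + -y) ⁻¹' D0 n) volume := by
  have hFD : IsAddFundamentalDomain (Lat n) (D0 n) volume :=
    ZSpan.isAddFundamentalDomain' (Pi.basisFun ℝ (Fin n)) volume
  have mp : MeasurePreserving (fun y : Fin n → ℝ => u + -y) volume volume :=
    (measurePreserving_add_left volume u).comp (Measure.measurePreserving_neg volume)
  refine hFD.preimage_of_equiv mp.quasiMeasurePreserving
    (e := fun g : Lat n => -g) neg_involutive.bijective ?_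
  intro g x
  show u + -((-g : Lat n) +ᵥ x) = g +ᵥ (u + -x)
  rw [lat_vadd, lat_vadd, AddSubgroup.coe_neg]
  abel

lemma torus_shift (F : (Fin n → ℝ) → ℝ≥0∞) (hF : Measurable F)
    (hper : ∀ (l : Fin n → ℤ) (y : Fin n → ℝ), F (y + zc l) = F y) (u : Fin n → ℝ) :
    ∫⁻ y in D0 n, F (u - y) = ∫⁻ y in D0 n, F y := by
  haveI : Countable (↥(Submodule.span ℤ (Set.range ⇑(Pi.basisFun ℝ (Fin n)))).toAddSubgroup) :=
    countable_lat
  haveI : Countable (Lat n) := countable_lat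
  have hFD : IsAddFundamentalDomain (Lat n) (D0 n) volume :=
    ZSpan.isAddFundamentalDomain' (Pi.basisFun ℝ (Fin n)) volume
  have mp : MeasurePreserving (fun y : Fin n → ℝ => u + -y) volume volume :=
    (measurePreserving_add_left volume u).comp (Measure.measurePreserving_neg volume)
  have hinv : Function.Involutive (fun y : Fin n → ℝ => u + -y) := by
    intro y; simp
  have hemb : MeasurableEmbedding (fun y : Fin n → ℝ => u + -y) := by
    have : (fun y : Fin n → ℝ => u + -y)
        = ⇑((MeasurableEquiv.neg (Fin n → ℝ)).trans (MeasurableEquiv.addLeft u)) := rfl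
    rw [this]
    exact MeasurableEquiv.measurableEmbedding _
  have step1 : ∫⁻ y in D0 n, F (u - y) = ∫⁻ z in (fun y : Fin n → ℝ => u + -y) '' D0 n, F z := by
    simp_rw [sub_eq_add_neg]
    exact mp.setLIntegral_comp_emb hemb F (D0 n)
  have himg : (fun y : Fin n → ℝ => u + -y) '' D0 n = (fun y : Fin n → ℝ => u + -y) ⁻¹' D0 n :=
    congrFun (Set.image_eq_preimage_of_inverse (g := fun y : Fin n → ℝ => u + -y) hinv hinv) (D0 n)
  have hFinv : ∀ (g : Lat n) (x : Fin n → ℝ), F (g +ᵥ x) = F x := by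
    intro g x
    obtain ⟨k, hk⟩ := latEquiv.surjective g
    rw [lat_vadd, ← hk, latEquiv_coe, add_comm]
    exact hper k x
  rw [step1, himg]
  exact (isFD_reflected u).setLIntegral_eq hFD F hFinv

/-! ### Key identities -/

lemma g_neg (B : Matrix (Fin n) (Fin n) ℝ) (t : ℝ) (v : Fin n → ℝ) : g B t (-v) = g B t v := by
  unfold g; rw [Q_neg]

lemma sq2 (x : ℝ≥0∞) : x ^ (2:ℝ) = x * x := by
  rw [show (2:ℝ) = ((2:ℕ):ℝ) by norm_num, ENNReal.rpow_natCast, sq]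

/-- integral of the periodization over the fundamental domain -/
lemma key0 (B : Matrix (Fin n) (Fin n) ℝ) (t : ℝ) :
    ∫⁻ y in D0 n, S B t y = ∫⁻ v, g B t v := by
  have h1 : ∫⁻ y in D0 n, S B t y
      = ∑' k : Fin n → ℤ, ∫⁻ y in D0 n, g B t (y - zc k) := by
    rw [show (fun y => S B t y) = fun y => ∑' k : Fin n → ℤ, g B t (y - zc k) from rfl]
    exact lintegral_tsum fun k =>
      ((measurable_g B t).comp (measurable_sub_const (zc k))).aemeasurable
  rw [h1, unfold_lintegral (g B t)]
  rw [← Equiv.tsum_eq (Equiv.neg (Fin n → ℤ))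
    (fun k => ∫⁻ y in D0 n, g B t (y - zc k))]
  apply tsum_congr; intro k
  apply lintegral_congr; intro y
  rw [Equiv.neg_apply, zc_neg, sub_neg_eq_add, add_comm]

/-- the convolution identity over the fundamental domain -/
lemma key1 (B : Matrix (Fin n) (Fin n) ℝ) (hB : B.det ≠ 0) {c : ℝ} (hc : 0 < c)
    (u : Fin n → ℝ) :
    ENNReal.ofReal (|B.det⁻¹| * (π / (4 * c)) ^ ((n : ℝ) / 2)) * S B c u
      = ∫⁻ y in D0 n, S B (2*c) (u - y) * S B (2*c) y := by
  have hmg := measurable_g B (2*c)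
  calc ENNReal.ofReal (|B.det⁻¹| * (π / (4 * c)) ^ ((n : ℝ) / 2)) * S B c u
      = ∑' k : Fin n → ℤ, ENNReal.ofReal (|B.det⁻¹| * (π / (4 * c)) ^ ((n : ℝ) / 2))
          * g B c (u - zc k) := by
        rw [S, ENNReal.tsum_mul_left]
    _ = ∑' k : Fin n → ℤ, ∫⁻ y, g B (2*c) (u - y) * g B (2*c) (y - zc k) := by
        exact tsum_congr fun k => (conv B hB hc u (zc k)).symm
    _ = ∫⁻ y, ∑' k : Fin n → ℤ, g B (2*c) (u - y) * g B (2*c) (y - zc k) := by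
        refine (lintegral_tsum fun k => ?_).symm
        exact ((hmg.comp (measurable_const_sub u)).mul
          (hmg.comp (measurable_sub_const (zc k)))).aemeasurable
    _ = ∫⁻ y, g B (2*c) (u - y) * S B (2*c) y := by
        apply lintegral_congr; intro y
        rw [S, ENNReal.tsum_mul_left]
    _ = ∑' k : Fin n → ℤ, ∫⁻ y in D0 n, g B (2*c) (u - (zc k + y)) * S B (2*c) (zc k + y) := by
        exact unfold_lintegral _
    _ = ∑' k : Fin n → ℤ, ∫⁻ y in D0 n, g B (2*c) ((u - y) - zc k) * S B (2*c) y := by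
        apply tsum_congr; intro k
        apply lintegral_congr; intro y
        congr 1
        · congr 1; abel
        · rw [add_comm, S_periodic]
    _ = ∫⁻ y in D0 n, ∑' k : Fin n → ℤ, g B (2*c) ((u - y) - zc k) * S B (2*c) y := by
        refine (lintegral_tsum fun k => ?_).symm
        exact ((hmg.comp ((measurable_const_sub u).sub_const (zc k))).mul
          (measurable_S B (2*c))).aemeasurable
    _ = ∫⁻ y in D0 n, S B (2*c) (u - y) * S B (2*c) y := by
        apply lintegral_congr; intro y
        rw [S, ENNReal.tsum_mul_right]
        rfl

/-- Cauchy–Schwarz bound: the periodization is maximized at 0 -/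
lemma key2 (B : Matrix (Fin n) (Fin n) ℝ) {c : ℝ} (u : Fin n → ℝ) :
    ∫⁻ y in D0 n, S B (2*c) (u - y) * S B (2*c) y
      ≤ ∫⁻ y in D0 n, S B (2*c) y * S B (2*c) y := by
  have hpq : Real.HolderConjugate 2 2 := Real.HolderConjugate.two_two
  have hmS := measurable_S B (2*c)
  have hmF : Measurable fun y : Fin n → ℝ => S B (2*c) (u - y) :=
    hmS.comp (measurable_const_sub u)
  have hP : ∫⁻ y in D0 n, S B (2*c) (u - y) * S B (2*c) (u - y)
      = ∫⁻ y in D0 n, S B (2*c) y * S B (2*c) y := by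
    exact torus_shift (fun y => S B (2*c) y * S B (2*c) y) (hmS.mul hmS)
      (fun l y => by
        show S B (2*c) (y + zc l) * S B (2*c) (y + zc l) = S B (2*c) y * S B (2*c) y
        rw [S_periodic]) u
  have hCS := ENNReal.lintegral_mul_le_Lp_mul_Lq (volume.restrict (D0 n)) hpq
    hmF.aemeasurable hmS.aemeasurable
  simp only [Pi.mul_apply] at hCS
  calc ∫⁻ y in D0 n, S B (2*c) (u - y) * S B (2*c) y
      ≤ (∫⁻ y in D0 n, (S B (2*c) (u - y)) ^ (2:ℝ)) ^ ((1:ℝ)/2)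
        * (∫⁻ y in D0 n, (S B (2*c) y) ^ (2:ℝ)) ^ ((1:ℝ)/2) := hCS
    _ = (∫⁻ y in D0 n, S B (2*c) y * S B (2*c) y) ^ ((1:ℝ)/2)
        * (∫⁻ y in D0 n, S B (2*c) y * S B (2*c) y) ^ ((1:ℝ)/2) := by
        simp only [sq2]
        rw [hP]
    _ = ∫⁻ y in D0 n, S B (2*c) y * S B (2*c) y := by
        rw [← ENNReal.rpow_add_of_nonneg ((1:ℝ)/2) ((1:ℝ)/2) (by norm_num) (by norm_num)]
        norm_num

/-- lower bound via Cauchy–Schwarz with 1 -/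
lemma key3 (B : Matrix (Fin n) (Fin n) ℝ) {c : ℝ} (u : Fin n → ℝ) :
    (∫⁻ y in D0 n, S B (2*c) y) * (∫⁻ y in D0 n, S B (2*c) y)
      + (∫⁻ y in D0 n, S B (2*c) y) * (∫⁻ y in D0 n, S B (2*c) y)
      ≤ (∫⁻ y in D0 n, S B (2*c) (u - y) * S B (2*c) y)
        + (∫⁻ y in D0 n, S B (2*c) y * S B (2*c) y) := by
  set m := ∫⁻ y in D0 n, S B (2*c) y with hm
  set Ju := ∫⁻ y in D0 n, S B (2*c) (u - y) * S B (2*c) y with hJu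
  set J0 := ∫⁻ y in D0 n, S B (2*c) y * S B (2*c) y with hJ0
  have hpq : Real.HolderConjugate 2 2 := Real.HolderConjugate.two_two
  have hmS := measurable_S B (2*c)
  have hmF : Measurable fun y : Fin n → ℝ => S B (2*c) (u - y) :=
    hmS.comp (measurable_const_sub u)
  have hper : ∀ (l : Fin n → ℤ) (y : Fin n → ℝ), S B (2*c) (y + zc l) = S B (2*c) y :=
    fun l y => S_periodic B (2*c) y l
  have hshift1 : ∫⁻ y in D0 n, S B (2*c) (u - y) = m :=
    torus_shift (S B (2*c)) hmS hper u
  have hshiftP : ∫⁻ y in D0 n, S B (2*c) (u - y) * S B (2*c) (u - y) = J0 :=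
    torus_shift (fun y => S B (2*c) y * S B (2*c) y) (hmS.mul hmS)
      (fun l y => by
        show S B (2*c) (y + zc l) * S B (2*c) (y + zc l) = S B (2*c) y * S B (2*c) y
        rw [S_periodic]) u
  have hsum : ∫⁻ y in D0 n, (S B (2*c) (u - y) + S B (2*c) y) = m + m := by
    rw [lintegral_add_left hmF, hshift1]
  have hCS := ENNReal.lintegral_mul_le_Lp_mul_Lq (volume.restrict (D0 n)) hpq
    (hmF.add hmS).aemeasurable (aemeasurable_const (b := (1:ℝ≥0∞)))
  simp only [Pi.mul_apply, Pi.add_apply, mul_one] at hCS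
  rw [hsum] at hCS
  have hone : ∫⁻ _ in D0 n, (1:ℝ≥0∞) ^ (2:ℝ) = 1 := by
    simp only [ENNReal.one_rpow]
    rw [setLIntegral_one, volume_D0]
  rw [hone, ENNReal.one_rpow, mul_one] at hCS
  have hsquare : (m + m) * (m + m)
      ≤ ∫⁻ y in D0 n, (S B (2*c) (u - y) + S B (2*c) y) ^ (2:ℝ) := by
    have h2 := ENNReal.rpow_le_rpow hCS (le_of_lt two_pos)
    rw [← ENNReal.rpow_mul] at h2
    have h3 : ((1:ℝ)/2) * 2 = 1 := by norm_num
    rw [h3, ENNReal.rpow_one] at h2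
    rw [sq2] at h2
    exact h2
  have hexpand : ∫⁻ y in D0 n, (S B (2*c) (u - y) + S B (2*c) y) ^ (2:ℝ)
      = J0 + (Ju + (Ju + J0)) := by
    have hpt : ∀ y, (S B (2*c) (u - y) + S B (2*c) y) ^ (2:ℝ)
        = S B (2*c) (u - y) * S B (2*c) (u - y)
          + (S B (2*c) (u - y) * S B (2*c) y
          + (S B (2*c) y * S B (2*c) (u - y) + S B (2*c) y * S B (2*c) y)) := by
      intro y; rw [sq2]; ring
    simp only [hpt]
    rw [lintegral_add_left (show Measurable fun y => S B (2*c) (u - y) * S B (2*c) (u - y) from hmF.mul hmF),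
      lintegral_add_left (show Measurable fun y => S B (2*c) (u - y) * S B (2*c) y from hmF.mul hmS),
      lintegral_add_left (show Measurable fun y => S B (2*c) y * S B (2*c) (u - y) from hmS.mul hmF), hshiftP]
    rw [show (∫⁻ (a : Fin n → ℝ) in D0 n, S B (2*c) a * S B (2*c) (u - a)) = Ju from by
      rw [hJu]; exact lintegral_congr fun y => mul_comm _ _]
  have H : (2:ℝ≥0∞) * (m * m + m * m) ≤ 2 * (Ju + J0) := by
    calc (2:ℝ≥0∞) * (m * m + m * m) = (m + m) * (m + m) := by ring
      _ ≤ J0 + (Ju + (Ju + J0)) := hsquare.trans_eq hexpand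
      _ = 2 * (Ju + J0) := by ring
  exact (ENNReal.mul_le_mul_iff_right two_ne_zero ENNReal.ofNat_ne_top).mp H

/-! ### Finiteness -/

lemma S_zero_ne_top (B : Matrix (Fin n) (Fin n) ℝ) (hB : B.det ≠ 0) {c : ℝ} (hc : 0 < c) :
    S B c (0 : Fin n → ℝ) ≠ ∞ := by
  set Mb := ∑ i, (∑ j, |B i j|)^2 with hMb
  have hQb : ∀ y ∈ D0 n, Q B y ≤ Mb := by
    intro y hy
    have hyc : ∀ i, y i ∈ Set.Ico (0:ℝ) 1 := by
      rw [D0, ZSpan.fundamentalDomain_pi_basisFun] at hy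
      exact fun i => hy i (Set.mem_univ i)
    unfold Q dotProduct
    apply Finset.sum_le_sum; intro i _
    have h1 : |(B *ᵥ y) i| ≤ ∑ j, |B i j| := by
      unfold Matrix.mulVec dotProduct
      refine (Finset.abs_sum_le_sum_abs _ _).trans ?_
      apply Finset.sum_le_sum; intro j _
      rw [abs_mul]
      have hyj : |y j| ≤ 1 := by
        have h := hyc j; rw [Set.mem_Ico] at h
        rw [abs_of_nonneg h.1]; linarith [h.2]
      calc |B i j| * |y j| ≤ |B i j| * 1 := mul_le_mul_of_nonneg_left hyj (abs_nonneg _)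
        _ = |B i j| := mul_one _
    calc (B *ᵥ y) i * (B *ᵥ y) i = |(B *ᵥ y) i| * |(B *ᵥ y) i| := (abs_mul_abs_self _).symm
      _ ≤ (∑ j, |B i j|) * (∑ j, |B i j|) :=
          mul_le_mul h1 h1 (abs_nonneg _) (le_trans (abs_nonneg _) h1)
      _ = (∑ j, |B i j|)^2 := (sq _).symm
  have hterm : ∀ k : Fin n → ℤ, g B c (zc k)
      ≤ ENNReal.ofReal (Real.exp (c * Mb)) * ∫⁻ y in D0 n, g B (c/2) (zc k + y) := by
    intro k
    have hlow : ENNReal.ofReal (Real.exp (-c * Q B (zc k) - c * Mb))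
        ≤ ∫⁻ y in D0 n, g B (c/2) (zc k + y) := by
      have hpt : ∀ y ∈ D0 n,
          ENNReal.ofReal (Real.exp (-c * Q B (zc k) - c * Mb)) ≤ g B (c/2) (zc k + y) := by
        intro y hy
        unfold g
        apply ENNReal.ofReal_le_ofReal
        apply Real.exp_le_exp.mpr
        have h1 := Q_add_le B (zc k) y
        have h2 := hQb y hy
        nlinarith [Q_nonneg B (zc k + y)]
      calc ENNReal.ofReal (Real.exp (-c * Q B (zc k) - c * Mb))
          = ENNReal.ofReal (Real.exp (-c * Q B (zc k) - c * Mb)) * volume (D0 n) := by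
            rw [volume_D0, mul_one]
        _ = ∫⁻ _ in D0 n, ENNReal.ofReal (Real.exp (-c * Q B (zc k) - c * Mb)) := by
            rw [setLIntegral_const]
        _ ≤ ∫⁻ y in D0 n, g B (c/2) (zc k + y) :=
            setLIntegral_mono ((measurable_g _ _).comp (measurable_const_add _)) hpt
    calc g B c (zc k)
        = ENNReal.ofReal (Real.exp (c * Mb))
          * ENNReal.ofReal (Real.exp (-c * Q B (zc k) - c * Mb)) := by
          unfold g
          rw [← ENNReal.ofReal_mul (Real.exp_nonneg _), ← Real.exp_add]
          congr 2
          ring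
      _ ≤ _ := mul_le_mul_right hlow _
  have hS0 : S B c 0 = ∑' k : Fin n → ℤ, g B c (zc k) := by
    rw [S]; apply tsum_congr; intro k
    rw [zero_sub, g_neg]
  rw [hS0]
  have hsum : ∑' k : Fin n → ℤ, g B c (zc k)
      ≤ ENNReal.ofReal (Real.exp (c * Mb)) * ∫⁻ v, g B (c/2) v := by
    calc ∑' k : Fin n → ℤ, g B c (zc k)
        ≤ ∑' k : Fin n → ℤ, ENNReal.ofReal (Real.exp (c * Mb))
            * ∫⁻ y in D0 n, g B (c/2) (zc k + y) := ENNReal.tsum_le_tsum hterm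
      _ = ENNReal.ofReal (Real.exp (c * Mb))
            * ∑' k : Fin n → ℤ, ∫⁻ y in D0 n, g B (c/2) (zc k + y) := ENNReal.tsum_mul_left
      _ = _ := by rw [← unfold_lintegral (g B (c/2))]
  refine ne_top_of_le_ne_top ?_ hsum
  rw [lintegral_g B hB (by positivity)]
  exact ENNReal.mul_ne_top ENNReal.ofReal_ne_top ENNReal.ofReal_ne_top

/-! ### Real-valued statements -/

noncomputable def Sr (B : Matrix (Fin n) (Fin n) ℝ) (c : ℝ) (u : Fin n → ℝ) : ℝ :=
  ∑' k : Fin n → ℤ, Real.exp (-c * Q B (u - zc k))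

lemma Sr_eq (B : Matrix (Fin n) (Fin n) ℝ) (c : ℝ) (u : Fin n → ℝ) :
    Sr B c u = (S B c u).toReal := by
  rw [S, ENNReal.tsum_toReal_eq (f := fun k => g B c (u - zc k))
    (fun k => by unfold g; exact ENNReal.ofReal_ne_top)]
  apply tsum_congr; intro k
  rw [show g B c (u - zc k) = ENNReal.ofReal (Real.exp (-c * Q B (u - zc k))) from rfl,
    ENNReal.toReal_ofReal (Real.exp_nonneg _)]

lemma J_zero (B : Matrix (Fin n) (Fin n) ℝ) (c : ℝ) :
    ∫⁻ y in D0 n, S B (2*c) ((0:Fin n → ℝ) - y) * S B (2*c) y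
      = ∫⁻ y in D0 n, S B (2*c) y * S B (2*c) y := by
  apply lintegral_congr; intro y
  rw [zero_sub, S_even]

lemma kappa_pos (B : Matrix (Fin n) (Fin n) ℝ) (hB : B.det ≠ 0) {c : ℝ} (hc : 0 < c) :
    0 < |B.det⁻¹| * (π / (4 * c)) ^ ((n : ℝ) / 2) := by
  have h1 : 0 < |B.det⁻¹| := abs_pos.mpr (inv_ne_zero hB)
  have h2 : (0:ℝ) < (π / (4 * c)) ^ ((n : ℝ) / 2) :=
    Real.rpow_pos_of_pos (by positivity) _
  positivity

/-- S is maximized at 0, in ℝ≥0∞ -/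
lemma S_le_S_zero (B : Matrix (Fin n) (Fin n) ℝ) (hB : B.det ≠ 0) {c : ℝ} (hc : 0 < c)
    (u : Fin n → ℝ) : S B c u ≤ S B c 0 := by
  have h1 := key1 B hB hc u
  have h2 := key1 B hB hc 0
  rw [J_zero] at h2
  have h3 : ENNReal.ofReal (|B.det⁻¹| * (π / (4 * c)) ^ ((n : ℝ) / 2)) * S B c u
      ≤ ENNReal.ofReal (|B.det⁻¹| * (π / (4 * c)) ^ ((n : ℝ) / 2)) * S B c 0 := by
    rw [h1, h2]
    exact key2 B u
  exact (ENNReal.mul_le_mul_iff_right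
    (by simp [ENNReal.ofReal_eq_zero, not_le, kappa_pos B hB hc, hB]; exact Real.rpow_pos_of_pos (div_pos pi_pos (by positivity)) _)
    ENNReal.ofReal_ne_top).mp h3

/-- the mean-value lower bound, in ℝ≥0∞ -/
lemma S_add_S_zero_ge (B : Matrix (Fin n) (Fin n) ℝ) (hB : B.det ≠ 0) {c : ℝ} (hc : 0 < c)
    (u : Fin n → ℝ) :
    ENNReal.ofReal (2 * (|B.det⁻¹| * (π / c) ^ ((n : ℝ) / 2))) ≤ S B c u + S B c 0 := by
  have hm : ∫⁻ y in D0 n, S B (2*c) y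
      = ENNReal.ofReal (|B.det⁻¹| * (π / (2 * c)) ^ ((n : ℝ) / 2)) := by
    rw [key0, lintegral_g B hB (by positivity)]
  have h3 := key3 B (c := c) u
  rw [hm] at h3
  have h1 := key1 B hB hc u
  have h2 := key1 B hB hc 0
  rw [J_zero] at h2
  have hup : ENNReal.ofReal (|B.det⁻¹| * (π / (2 * c)) ^ ((n : ℝ) / 2))
        * ENNReal.ofReal (|B.det⁻¹| * (π / (2 * c)) ^ ((n : ℝ) / 2))
        + ENNReal.ofReal (|B.det⁻¹| * (π / (2 * c)) ^ ((n : ℝ) / 2))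
        * ENNReal.ofReal (|B.det⁻¹| * (π / (2 * c)) ^ ((n : ℝ) / 2))
      ≤ ENNReal.ofReal (|B.det⁻¹| * (π / (4 * c)) ^ ((n : ℝ) / 2)) * (S B c u + S B c 0) := by
    rw [mul_add, h1, h2]
    exact h3
  have hconst : ENNReal.ofReal (|B.det⁻¹| * (π / (2 * c)) ^ ((n : ℝ) / 2))
        * ENNReal.ofReal (|B.det⁻¹| * (π / (2 * c)) ^ ((n : ℝ) / 2))
        + ENNReal.ofReal (|B.det⁻¹| * (π / (2 * c)) ^ ((n : ℝ) / 2))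
        * ENNReal.ofReal (|B.det⁻¹| * (π / (2 * c)) ^ ((n : ℝ) / 2))
      = ENNReal.ofReal (|B.det⁻¹| * (π / (4 * c)) ^ ((n : ℝ) / 2))
        * ENNReal.ofReal (2 * (|B.det⁻¹| * (π / c) ^ ((n : ℝ) / 2))) := by
    rw [← ENNReal.ofReal_mul (by positivity), ← ENNReal.ofReal_mul (by positivity)]
    rw [← two_mul, show (2:ℝ≥0∞) = ENNReal.ofReal (2:ℝ) by simp,
      ← ENNReal.ofReal_mul (by norm_num)]
    congr 1
    have hkey : (π / (4 * c)) ^ ((n : ℝ) / 2) * (π / c) ^ ((n : ℝ) / 2)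
        = (π / (2 * c)) ^ ((n : ℝ) / 2) * (π / (2 * c)) ^ ((n : ℝ) / 2) := by
      rw [← Real.mul_rpow (by positivity) (by positivity),
        ← Real.mul_rpow (by positivity) (by positivity)]
      congr 1
      field_simp
      ring
    linear_combination (-2 * |B.det⁻¹|^2) * hkey
  rw [hconst] at hup
  exact (ENNReal.mul_le_mul_iff_right
    (by simp [ENNReal.ofReal_eq_zero, not_le, kappa_pos B hB hc, hB]; exact Real.rpow_pos_of_pos (div_pos pi_pos (by positivity)) _)
    ENNReal.ofReal_ne_top).mp hup

lemma Sr_le (B : Matrix (Fin n) (Fin n) ℝ) (hB : B.det ≠ 0) {c : ℝ} (hc : 0 < c)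
    (u : Fin n → ℝ) : Sr B c u ≤ Sr B c 0 := by
  rw [Sr_eq, Sr_eq]
  exact ENNReal.toReal_mono (S_zero_ne_top B hB hc) (S_le_S_zero B hB hc u)

lemma Sr_lower (B : Matrix (Fin n) (Fin n) ℝ) (hB : B.det ≠ 0) {c : ℝ} (hc : 0 < c)
    (u : Fin n → ℝ) :
    2 * (|B.det⁻¹| * (π / c) ^ ((n:ℝ)/2)) ≤ Sr B c u + Sr B c 0 := by
  have hfin0 := S_zero_ne_top B hB hc
  have hfinu : S B c u ≠ ⊤ := ne_top_of_le_ne_top hfin0 (S_le_S_zero B hB hc u)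
  have h := S_add_S_zero_ge B hB hc u
  have h2 := ENNReal.toReal_mono (ENNReal.add_ne_top.mpr ⟨hfinu, hfin0⟩) h
  rw [ENNReal.toReal_ofReal (by positivity), ENNReal.toReal_add hfinu hfin0] at h2
  rw [Sr_eq, Sr_eq]
  exact h2

end Stmt11Aux

open Stmt11Aux in
theorem stmt11 {n : ℕ} (hn : 0 < n) (B : Matrix (Fin n) (Fin n) ℝ) (hB : IsUnit B.det)
    (σ : ℝ) (hσ : 0 < σ) :
    (⨆ x : Fin n → ℝ, |(|B.det|) * (∑' k : Fin n → ℤ,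
        (2 * π * σ ^ 2) ^ (-(n : ℝ) / 2) *
          Real.exp (-((x - B *ᵥ fun i => (k i : ℝ)) ⬝ᵥ (x - B *ᵥ fun i => (k i : ℝ))) /
            (2 * σ ^ 2))) - 1|)
    = ((|B.det| ^ (2 / (n : ℝ)) / σ ^ 2) / (2 * π)) ^ ((n : ℝ) / 2) *
        (∑' k : Fin n → ℤ, Real.exp (-π * (1 / (2 * π * σ ^ 2)) *
          ((B *ᵥ fun i => (k i : ℝ)) ⬝ᵥ (B *ᵥ fun i => (k i : ℝ))))) - 1 := by
  classical
  have hdet : B.det ≠ 0 := hB.ne_zero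
  have hσ2 : (0:ℝ) < σ ^ 2 := by positivity
  have h2πσ : (0:ℝ) < 2 * π * σ ^ 2 := by positivity
  have hdetabs : 0 < |B.det| := abs_pos.mpr hdet
  have hnR : ((n:ℝ)) ≠ 0 := Nat.cast_ne_zero.mpr hn.ne'
  set c : ℝ := 1 / (2 * σ ^ 2) with hc_def
  have hc : 0 < c := by rw [hc_def]; positivity
  set A : ℝ := |B.det| * (2 * π * σ ^ 2) ^ (-(n:ℝ)/2) with hA_def
  have hApos : 0 < A := by
    rw [hA_def]
    exact mul_pos hdetabs (Real.rpow_pos_of_pos h2πσ _)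
  have hE : ∀ x : Fin n → ℝ,
      (|B.det|) * (∑' k : Fin n → ℤ, (2 * π * σ ^ 2) ^ (-(n : ℝ) / 2) *
          Real.exp (-((x - B *ᵥ fun i => (k i : ℝ)) ⬝ᵥ (x - B *ᵥ fun i => (k i : ℝ))) /
            (2 * σ ^ 2)))
      = A * Sr B c (B⁻¹ *ᵥ x) := by
    intro x
    rw [tsum_mul_left, ← mul_assoc, ← hA_def]
    congr 1
    rw [Sr]
    apply tsum_congr; intro k
    have hBu : B *ᵥ (B⁻¹ *ᵥ x - zc k) = x - B *ᵥ (fun i => ((k i : ℝ))) := by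
      rw [Matrix.mulVec_sub, Matrix.mulVec_mulVec, Matrix.mul_nonsing_inv B hB,
        Matrix.one_mulVec]
      rfl
    congr 1
    rw [show Q B (B⁻¹ *ᵥ x - zc k)
        = (x - B *ᵥ fun i => (k i : ℝ)) ⬝ᵥ (x - B *ᵥ fun i => (k i : ℝ)) from by
      rw [Q, hBu]]
    rw [hc_def]
    ring
  have hRHS : ((|B.det| ^ (2 / (n : ℝ)) / σ ^ 2) / (2 * π)) ^ ((n : ℝ) / 2) *
      (∑' k : Fin n → ℤ, Real.exp (-π * (1 / (2 * π * σ ^ 2)) *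
        ((B *ᵥ fun i => (k i : ℝ)) ⬝ᵥ (B *ᵥ fun i => (k i : ℝ)))))
      = A * Sr B c 0 := by
    congr 1
    · rw [hA_def]
      have hb : |B.det| ^ (2/(n:ℝ)) / σ ^ 2 / (2 * π)
          = |B.det| ^ (2/(n:ℝ)) * (2 * π * σ ^ 2)⁻¹ := by
        rw [div_div, div_eq_mul_inv]
        congr 2
        ring
      rw [hb, Real.mul_rpow (Real.rpow_nonneg (abs_nonneg _) _) (inv_nonneg.mpr h2πσ.le)]
      congr 1
      · rw [← Real.rpow_mul (abs_nonneg _)]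
        rw [show (2/(n:ℝ)) * ((n:ℝ)/2) = 1 from by field_simp, Real.rpow_one]
      · rw [Real.inv_rpow h2πσ.le, ← Real.rpow_neg h2πσ.le]
        congr 1
        ring
    · rw [Sr]
      apply tsum_congr; intro k
      congr 1
      rw [zero_sub, Q_neg,
        show Q B (zc k) = (B *ᵥ fun i => (k i : ℝ)) ⬝ᵥ (B *ᵥ fun i => (k i : ℝ)) from rfl,
        hc_def]
      field_simp
  rw [hRHS]
  have hsup : (⨆ x : Fin n → ℝ, |(|B.det|) * (∑' k : Fin n → ℤ,
        (2 * π * σ ^ 2) ^ (-(n : ℝ) / 2) *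
          Real.exp (-((x - B *ᵥ fun i => (k i : ℝ)) ⬝ᵥ (x - B *ᵥ fun i => (k i : ℝ))) /
            (2 * σ ^ 2))) - 1|)
      = ⨆ x : Fin n → ℝ, |A * Sr B c (B⁻¹ *ᵥ x) - 1| := by
    congr 1
    funext x
    rw [hE x]
  rw [hsup]
  have habs : ∀ u : Fin n → ℝ, |A * Sr B c u - 1| ≤ A * Sr B c 0 - 1 := by
    intro u
    have h1 : Sr B c u ≤ Sr B c 0 := Sr_le B hdet hc u
    have hub : A * Sr B c u - 1 ≤ A * Sr B c 0 - 1 := by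
      have := mul_le_mul_of_nonneg_left h1 hApos.le
      linarith
    have hAc : A * (2 * (|B.det⁻¹| * (π / c) ^ ((n:ℝ)/2))) = 2 := by
      rw [hA_def, hc_def, abs_inv]
      have hπc : π / (1 / (2 * σ ^ 2)) = 2 * π * σ ^ 2 := by
        field_simp
      rw [hπc]
      have h1 : (2 * π * σ ^ 2) ^ (-(n:ℝ)/2) * (2 * π * σ ^ 2) ^ ((n:ℝ)/2) = 1 := by
        rw [← Real.rpow_add h2πσ, show -(n:ℝ)/2 + (n:ℝ)/2 = 0 by ring, Real.rpow_zero]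
      calc |B.det| * (2 * π * σ ^ 2) ^ (-(n:ℝ)/2)
            * (2 * (|B.det|⁻¹ * (2 * π * σ ^ 2) ^ ((n:ℝ)/2)))
          = 2 * (|B.det| * |B.det|⁻¹)
            * ((2 * π * σ ^ 2) ^ (-(n:ℝ)/2) * (2 * π * σ ^ 2) ^ ((n:ℝ)/2)) := by ring
        _ = 2 := by rw [mul_inv_cancel₀ hdetabs.ne', h1, mul_one, mul_one]
    have h2 : 2 ≤ A * (Sr B c u + Sr B c 0) := by
      calc (2:ℝ) = A * (2 * (|B.det⁻¹| * (π / c) ^ ((n:ℝ)/2))) := hAc.symm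
        _ ≤ A * (Sr B c u + Sr B c 0) :=
            mul_le_mul_of_nonneg_left (Sr_lower B hdet hc u) hApos.le
    have hlb : -(A * Sr B c 0 - 1) ≤ A * Sr B c u - 1 := by nlinarith
    exact abs_le.mpr ⟨hlb, hub⟩
  have hnn : 0 ≤ A * Sr B c 0 - 1 := by
    have := habs 0
    have h0 := abs_nonneg (A * Sr B c 0 - 1)
    linarith [this]
  apply le_antisymm
  · exact ciSup_le fun x => habs _
  · have hbdd : BddAbove (Set.range fun x : Fin n → ℝ => |A * Sr B c (B⁻¹ *ᵥ x) - 1|) := by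
      refine ⟨A * Sr B c 0 - 1, ?_⟩
      rintro y ⟨x, rfl⟩
      exact habs _
    have h0 := le_ciSup hbdd (0 : Fin n → ℝ)
    simp only [Matrix.mulVec_zero] at h0
    rw [abs_of_nonneg hnn] at h0
    exact h0
end

section
/- Let M be a random variable (message) on a finite set, and let Y be a random variable such that for some density q, the variational distance satisfies V(p_{Y|M=m}, q) ≤ ε for all m, with 0 < ε ≤ 1/2, and |range(M)| = e^{TR}. Then the mutual information is bounded as I(M; Y) ≤ 2εTR − 2ε log(2ε). -/
theorem stmt17 {M Y : Type*} [Fintype M] [Fintype Y] [Nonempty M] [Nonempty Y]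
    (pM : M → ℝ) (p : M → Y → ℝ) (q : Y → ℝ) (ε T R : ℝ)
    (hpM : ∀ m, 0 ≤ pM m) (hpM1 : ∑ m, pM m = 1)
    (hp : ∀ m y, 0 ≤ p m y) (hp1 : ∀ m, ∑ y, p m y = 1)
    (hq : ∀ y, 0 ≤ q y) (hq1 : ∑ y, q y = 1)
    (hT : 0 < T) (hR : 0 ≤ R)
    (hcard : Real.log (Fintype.card M) = T * R)
    (hε : 0 < ε) (hε2 : ε ≤ 1 / 2)
    (hV : ∀ m, ∑ y, |p m y - q y| ≤ ε) :
    (∑ m, ∑ y, pM m * p m y * Real.log (p m y / (∑ m', pM m' * p m' y)))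
      ≤ 2 * ε * T * R - 2 * ε * Real.log (2 * ε) := by
  classical
  set K : ℝ := (Fintype.card M : ℝ) with hK
  have hK1 : (1:ℝ) ≤ K := by
    have h : 1 ≤ Fintype.card M := Fintype.card_pos
    rw [hK]
    exact_mod_cast h
  have hKpos : (0:ℝ) < K := lt_of_lt_of_le one_pos hK1
  have hKlog : (0:ℝ) ≤ Real.log K := Real.log_nonneg hK1
  set pY : Y → ℝ := fun y => ∑ m', pM m' * p m' y with hpYdef
  have hpY0 : ∀ y, 0 ≤ pY y := fun y =>
    Finset.sum_nonneg fun m _ => mul_nonneg (hpM m) (hp m y)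
  have hpYtot : ∑ y, pY y = 1 := by
    rw [show (∑ y, pY y) = ∑ m', ∑ y, pM m' * p m' y from Finset.sum_comm]
    simp only [← Finset.mul_sum]
    simp only [hp1, mul_one, hpM1]
  have hpMle1 : ∀ m, pM m ≤ 1 := by
    intro m
    rw [← hpM1]
    exact Finset.single_le_sum (fun i _ => hpM i) (Finset.mem_univ m)
  -- variational distance between p m and pY is at most 2ε
  have hqY : ∑ y, |q y - pY y| ≤ ε := by
    have h1 : ∀ y, |q y - pY y| ≤ ∑ m', pM m' * |q y - p m' y| := by
      intro y
      have : q y - pY y = ∑ m', pM m' * (q y - p m' y) := by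
        simp only [mul_sub, Finset.sum_sub_distrib, ← Finset.sum_mul, hpM1, one_mul, hpYdef]
      rw [this]
      calc |∑ m', pM m' * (q y - p m' y)| ≤ ∑ m', |pM m' * (q y - p m' y)| :=
            Finset.abs_sum_le_sum_abs _ _
        _ = ∑ m', pM m' * |q y - p m' y| := by
            refine Finset.sum_congr rfl fun m' _ => ?_
            rw [abs_mul, abs_of_nonneg (hpM m')]
    calc ∑ y, |q y - pY y| ≤ ∑ y, ∑ m', pM m' * |q y - p m' y| :=
          Finset.sum_le_sum fun y _ => h1 y
      _ = ∑ m', pM m' * ∑ y, |q y - p m' y| := by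
          rw [Finset.sum_comm]
          simp only [Finset.mul_sum]
      _ ≤ ∑ m', pM m' * ε := by
          refine Finset.sum_le_sum fun m' _ => ?_
          refine mul_le_mul_of_nonneg_left ?_ (hpM m')
          calc ∑ y, |q y - p m' y| = ∑ y, |p m' y - q y| := by
                refine Finset.sum_congr rfl fun y _ => abs_sub_comm _ _
            _ ≤ ε := hV m'
      _ = ε := by rw [← Finset.sum_mul, hpM1, one_mul]
  have hTV : ∀ m, ∑ y, |p m y - pY y| ≤ 2 * ε := by
    intro m
    calc ∑ y, |p m y - pY y| ≤ ∑ y, (|p m y - q y| + |q y - pY y|) := by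
          refine Finset.sum_le_sum fun y _ => ?_
          have := abs_sub_le (p m y) (q y) (pY y)
          linarith
      _ = (∑ y, |p m y - q y|) + ∑ y, |q y - pY y| := Finset.sum_add_distrib
      _ ≤ ε + ε := add_le_add (hV m) hqY
      _ = 2 * ε := by ring
  have hzero : ∀ m, ∑ y, (p m y - pY y) = 0 := by
    intro m
    rw [Finset.sum_sub_distrib, hp1, hpYtot, sub_self]
  have hpos : ∀ m, ∑ y, max 0 (p m y - pY y) ≤ ε := by
    intro m
    have hmax : ∀ a : ℝ, max 0 a = (a + |a|) / 2 := by
      intro a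
      rcases le_total a 0 with h | h
      · rw [max_eq_left h, abs_of_nonpos h]; ring
      · rw [max_eq_right h, abs_of_nonneg h]; ring
    calc ∑ y, max 0 (p m y - pY y) = ∑ y, ((p m y - pY y) + |p m y - pY y|) / 2 := by
          refine Finset.sum_congr rfl fun y _ => hmax _
      _ = ((∑ y, (p m y - pY y)) + ∑ y, |p m y - pY y|) / 2 := by
          rw [← Finset.sum_add_distrib, ← Finset.sum_div]
      _ ≤ (0 + 2 * ε) / 2 := by
          have := hTV m
          have := hzero m
          linarith
      _ = ε := by ring
  -- the coefficient c m = log(1/pM m) + 1 is nonnegative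
  have hc0 : ∀ m, 0 ≤ Real.log (1 / pM m) + 1 := by
    intro m
    rcases eq_or_lt_of_le (hpM m) with h0 | h0
    · rw [← h0]; norm_num
    · have : (1:ℝ) ≤ 1 / pM m := by
        rw [le_div_iff₀ h0]; simpa using hpMle1 m
      have := Real.log_nonneg this
      linarith
  -- entropy bound : H(pM) ≤ log K
  have hH : (∑ m, pM m * Real.log (1 / pM m)) ≤ Real.log K := by
    have hterm : ∀ m, pM m * Real.log (1 / pM m) ≤ (1 / K - pM m) + pM m * Real.log K := by
      intro m
      rcases eq_or_lt_of_le (hpM m) with h0 | h0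
      · rw [← h0]
        have : (0:ℝ) ≤ 1 / K := by positivity
        simpa using this
      · have hsplit : Real.log (1 / pM m) = Real.log (1 / (K * pM m)) + Real.log K := by
          rw [← Real.log_mul (by positivity) (ne_of_gt hKpos)]
          congr 1
          field_simp
        have hlog : Real.log (1 / (K * pM m)) ≤ 1 / (K * pM m) - 1 :=
          Real.log_le_sub_one_of_pos (by positivity)
        have h2 : pM m * Real.log (1 / (K * pM m)) ≤ pM m * (1 / (K * pM m) - 1) :=
          mul_le_mul_of_nonneg_left hlog (hpM m)
        have h3 : pM m * (1 / (K * pM m) - 1) = 1 / K - pM m := by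
          field_simp
        rw [hsplit, mul_add]
        linarith
    calc (∑ m, pM m * Real.log (1 / pM m)) ≤ ∑ m, ((1 / K - pM m) + pM m * Real.log K) :=
          Finset.sum_le_sum fun m _ => hterm m
      _ = (∑ m, (1 / K - pM m)) + (∑ m, pM m) * Real.log K := by
          rw [Finset.sum_add_distrib, Finset.sum_mul]
      _ = Real.log K := by
          rw [Finset.sum_sub_distrib, hpM1, Finset.sum_const, Finset.card_univ]
          rw [nsmul_eq_mul]
          rw [show ((Fintype.card M : ℝ)) = K from rfl]
          field_simp
          ring
  -- key termwise bound (main)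
  have key : ∀ m y, pM m * p m y * Real.log (p m y / pY y) ≤
      pM m * (Real.log (1 / pM m) + 1) * max 0 (p m y - pY y) := by
    intro m y
    rcases eq_or_lt_of_le (hpM m) with h0 | h0
    · rw [← h0]; simp
    rcases eq_or_lt_of_le (hp m y) with hp0 | hp0
    · rw [← hp0]
      have h1 : max 0 (0 - pY y) = 0 := max_eq_left (by linarith [hpY0 y])
      rw [h1]
      simp
    have hpYm : pM m * p m y ≤ pY y := by
      rw [hpYdef]
      exact Finset.single_le_sum (f := fun m' => pM m' * p m' y)
        (fun i _ => mul_nonneg (hpM i) (hp i y)) (Finset.mem_univ m)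
    have hpYpos : 0 < pY y := lt_of_lt_of_le (by positivity) hpYm
    rcases le_or_gt (p m y) (pY y) with hle | hgt
    · -- log ratio ≤ 0, RHS ≥ 0
      have hlog : Real.log (p m y / pY y) ≤ 0 :=
        Real.log_nonpos (by positivity) ((div_le_one hpYpos).mpr hle)
      have hL : pM m * p m y * Real.log (p m y / pY y) ≤ 0 :=
        mul_nonpos_of_nonneg_of_nonpos (by positivity) hlog
      have hR' : 0 ≤ pM m * (Real.log (1 / pM m) + 1) * max 0 (p m y - pY y) := by
        have := hc0 m
        have : 0 ≤ pM m * (Real.log (1 / pM m) + 1) := mul_nonneg (hpM m) this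
        exact mul_nonneg this (le_max_left _ _)
      linarith
    · -- chord bound
      have hmax : max 0 (p m y - pY y) = p m y - pY y := max_eq_right (by linarith)
      have hrpos : 0 < p m y / pY y := by positivity
      have hratio : p m y / pY y ≤ 1 / pM m := by
        rw [div_le_div_iff₀ hpYpos h0]
        linarith [hpYm]
      have hlogratio : Real.log (p m y / pY y) ≤ Real.log (1 / pM m) :=
        Real.log_le_log hrpos hratio
      have hchord : p m y * Real.log (p m y / pY y) ≤
          (p m y - pY y) * (Real.log (1 / pM m) + 1) := by
        have h1 : pY y * Real.log (p m y / pY y) ≤ pY y * (p m y / pY y - 1) :=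
          mul_le_mul_of_nonneg_left (Real.log_le_sub_one_of_pos hrpos) (hpY0 y)
        have h2 : pY y * (p m y / pY y - 1) = p m y - pY y := by
          field_simp
        have h3 : (p m y - pY y) * Real.log (p m y / pY y) ≤
            (p m y - pY y) * Real.log (1 / pM m) :=
          mul_le_mul_of_nonneg_left hlogratio (by linarith)
        have hsplit : p m y * Real.log (p m y / pY y) =
            (p m y - pY y) * Real.log (p m y / pY y) + pY y * Real.log (p m y / pY y) := by
          ring
        rw [hsplit]
        linarith
      calc pM m * p m y * Real.log (p m y / pY y)
          = pM m * (p m y * Real.log (p m y / pY y)) := by ring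
        _ ≤ pM m * ((p m y - pY y) * (Real.log (1 / pM m) + 1)) :=
            mul_le_mul_of_nonneg_left hchord (hpM m)
        _ = pM m * (Real.log (1 / pM m) + 1) * max 0 (p m y - pY y) := by
            rw [hmax]; ring
  -- main bound: I ≤ ε (H + 1)
  have hmain : (∑ m, ∑ y, pM m * p m y * Real.log (p m y / pY y)) ≤
      ε * ((∑ m, pM m * Real.log (1 / pM m)) + 1) := by
    have step1 : ∀ m, (∑ y, pM m * p m y * Real.log (p m y / pY y)) ≤
        ε * (pM m * (Real.log (1 / pM m) + 1)) := by
      intro m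
      calc (∑ y, pM m * p m y * Real.log (p m y / pY y))
          ≤ ∑ y, pM m * (Real.log (1 / pM m) + 1) * max 0 (p m y - pY y) :=
            Finset.sum_le_sum fun y _ => key m y
        _ = pM m * (Real.log (1 / pM m) + 1) * ∑ y, max 0 (p m y - pY y) := by
            rw [← Finset.mul_sum]
        _ ≤ pM m * (Real.log (1 / pM m) + 1) * ε :=
            mul_le_mul_of_nonneg_left (hpos m) (mul_nonneg (hpM m) (hc0 m))
        _ = ε * (pM m * (Real.log (1 / pM m) + 1)) := by ring
    calc (∑ m, ∑ y, pM m * p m y * Real.log (p m y / pY y))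
        ≤ ∑ m, ε * (pM m * (Real.log (1 / pM m) + 1)) :=
          Finset.sum_le_sum fun m _ => step1 m
      _ = ε * ((∑ m, pM m * Real.log (1 / pM m)) + 1) := by
          rw [← Finset.mul_sum]
          congr 1
          rw [show (∑ m, pM m * (Real.log (1 / pM m) + 1)) =
            (∑ m, (pM m * Real.log (1 / pM m) + pM m)) from
            Finset.sum_congr rfl fun m _ => by ring]
          rw [Finset.sum_add_distrib, hpM1]
  -- crude bound: I ≤ H ≤ log K
  have hcrude : (∑ m, ∑ y, pM m * p m y * Real.log (p m y / pY y)) ≤ Real.log K := by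
    have key2 : ∀ m y, pM m * p m y * Real.log (p m y / pY y) ≤
        pM m * p m y * Real.log (1 / pM m) := by
      intro m y
      rcases eq_or_lt_of_le (hpM m) with h0 | h0
      · rw [← h0]; simp
      rcases eq_or_lt_of_le (hp m y) with hp0 | hp0
      · rw [← hp0]; simp
      have hpYm : pM m * p m y ≤ pY y := by
        rw [hpYdef]
        exact Finset.single_le_sum (f := fun m' => pM m' * p m' y)
          (fun i _ => mul_nonneg (hpM i) (hp i y)) (Finset.mem_univ m)
      have hpYpos : 0 < pY y := lt_of_lt_of_le (by positivity) hpYm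
      have hratio : p m y / pY y ≤ 1 / pM m := by
        rw [div_le_div_iff₀ hpYpos h0]
        linarith [hpYm]
      have hlogratio : Real.log (p m y / pY y) ≤ Real.log (1 / pM m) :=
        Real.log_le_log (by positivity) hratio
      exact mul_le_mul_of_nonneg_left hlogratio (by positivity)
    calc (∑ m, ∑ y, pM m * p m y * Real.log (p m y / pY y))
        ≤ ∑ m, ∑ y, pM m * p m y * Real.log (1 / pM m) :=
          Finset.sum_le_sum fun m _ => Finset.sum_le_sum fun y _ => key2 m y
      _ = ∑ m, pM m * Real.log (1 / pM m) := by
          refine Finset.sum_congr rfl fun m _ => ?_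
          rw [show (∑ y, pM m * p m y * Real.log (1 / pM m)) =
            (pM m * Real.log (1 / pM m)) * ∑ y, p m y from by
              rw [Finset.mul_sum]; exact Finset.sum_congr rfl fun y _ => by ring]
          rw [hp1, mul_one]
      _ ≤ Real.log K := hH
  -- finish
  have hTR : T * R = Real.log K := hcard.symm
  have hεs : 0 < 2 * ε := by linarith
  have hεs1 : 2 * ε ≤ 1 := by linarith
  have hlog2ε : Real.log (2 * ε) ≤ 2 * ε - 1 := Real.log_le_sub_one_of_pos hεs
  have hlog2εneg : Real.log (2 * ε) ≤ 0 := Real.log_nonpos (by linarith) hεs1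
  have htarget : 2 * ε * T * R - 2 * ε * Real.log (2 * ε) =
      ε * (2 * Real.log K - 2 * Real.log (2 * ε)) := by
    rw [mul_assoc (2 * ε) T R, hTR]; ring
  rw [htarget]
  by_cases hcase : 1 + 2 * Real.log (2 * ε) ≤ Real.log K
  · calc (∑ m, ∑ y, pM m * p m y * Real.log (p m y / pY y))
        ≤ ε * ((∑ m, pM m * Real.log (1 / pM m)) + 1) := hmain
      _ ≤ ε * (Real.log K + 1) := by
          refine mul_le_mul_of_nonneg_left ?_ hε.le
          linarith [hH]
      _ ≤ ε * (2 * Real.log K - 2 * Real.log (2 * ε)) := by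
          refine mul_le_mul_of_nonneg_left ?_ hε.le
          linarith
  · push_neg at hcase
    have hψ : 2 * ε - 1 + (2 * ε - 2) * Real.log (2 * ε) ≥ 0 := by
      nlinarith [hlog2ε, sq_nonneg (2 * ε - 1)]
    calc (∑ m, ∑ y, pM m * p m y * Real.log (p m y / pY y))
        ≤ Real.log K := hcrude
      _ ≤ ε * (2 * Real.log K - 2 * Real.log (2 * ε)) := by
          nlinarith [hψ, hcase, hεs1, hε, hlog2εneg,
            mul_nonneg (by linarith : (0:ℝ) ≤ 1 - 2 * ε)
              (by linarith : (0:ℝ) ≤ 1 + 2 * Real.log (2 * ε) - Real.log K)]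
end
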